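/- Let α ∈ (0,1/2) be irrational. Then for every k ≥ 1 the following hold: (1) if (ε_k(0),ε_k(1)) = (1,0) and (ε_{k+1}(0),ε_{k+1}(1)) = (0,1), then s_k(0) − s_{k+1}(1) = 1; (2) if (ε_k(0),ε_k(1)) = (1,0) and (ε_{k+1}(0),ε_{k+1}(1)) = (1,0), then s_k(0) − s_{k+1}(0) = 1; (3) if (ε_k(0),ε_k(1)) = (1,1) and (ε_{k+1}(0),ε_{k+1}(1)) = (1,0), then s_k(0) − s_{k+1}(0) = 1; (4) if (ε_k(0),ε_k(1)) = (1,1) and (ε_{k+1}(0),ε_{k+1}(1)) = (0,1), then s_k(0) − s_{k+1}(1) = 1; (5) if (ε_k(0),ε_k(1)) = (0,1) and (ε_{k+1}(0),ε_{k+1}(1)) = (1,1), then s_{k+1}(0) − s_k(1) = n_{k+1} − 1. -/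

import Mathlib

/-- `φ(x) = 1` if the fractional part of `x` lies in `[0,1/2)`, and `−1` otherwise. -/
noncomputable def phi (x : ℝ) : ℤ := if Int.fract x < 1/2 then 1 else -1

/-- `β_k`: the orbit of `β` under the minus (modified) continued fraction algorithm. -/
noncomputable def betaSeq (β : ℝ) : ℕ → ℝ
  | 0 => β
  | k+1 => (⌈1 / betaSeq β k⌉ : ℝ) - 1 / betaSeq β k

/-- The minus continued fraction digits: `nDigit β k = n_{k+1} = ⌈1/β_k⌉`. -/
noncomputable def nDigit (β : ℝ) (k : ℕ) : ℤ := ⌈1 / betaSeq β k⌉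

/-- Block lengths `(ℓ_k(0), ℓ_k(1))`. -/
noncomputable def ell (β : ℝ) : ℕ → ℕ × ℕ
  | 0 => (1, 1)
  | k+1 => ((nDigit β k - 1).toNat * (ell β k).1 + (ell β k).2,
            (nDigit β k - 2).toNat * (ell β k).1 + (ell β k).2)

/-- The substitution words `(b_k(0), b_k(1))` over `{0,1}`. -/
noncomputable def bword (β : ℝ) : ℕ → List ℕ × List ℕ
  | 0 => ([0], [1])
  | k+1 =>
      ((List.replicate (nDigit β k - 1).toNat (bword β k).1).flatten ++ (bword β k).2,
       (List.replicate (nDigit β k - 2).toNat (bword β k).1).flatten ++ (bword β k).2)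

/-- Parities `(ε_k(0), ε_k(1))`: the sums of the letters of `b_k(0)`, `b_k(1)` mod 2. -/
noncomputable def eps (β : ℝ) (k : ℕ) : ℕ × ℕ :=
  ((bword β k).1.sum % 2, (bword β k).2.sum % 2)

/-- Position `s_k(i) = ∑_{j=0}^{ℓ−1} φ({jα})` where `ℓ = ℓ_k(i)`. -/
noncomputable def sPos (α : ℝ) (ℓ : ℕ) : ℤ :=
  ∑ j ∈ Finset.range ℓ, phi (Int.fract ((j : ℝ) * α))

/-- The coding word of the rotation by `β`. -/
noncomputable def cw (β : ℝ) (j : ℕ) : ℕ := (⌊((j : ℝ) + 1) * β⌋ - ⌊(j : ℝ) * β⌋).toNat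

/-- `tpair w = (t, σ)` : `t` is the walk sum along the word `w` entering with sign `+1`,
`σ` is the exiting sign. -/
def tpair : List ℕ → ℤ × ℤ
  | [] => (0, 1)
  | a :: w => (1 + (-1) ^ a * (tpair w).1, (-1) ^ a * (tpair w).2)

lemma tpair_append (u v : List ℕ) :
    tpair (u ++ v) = ((tpair u).1 + (tpair u).2 * (tpair v).1, (tpair u).2 * (tpair v).2) := by
  induction u with
  | nil => simp [tpair]
  | cons a u ih => simp [tpair, ih]; ring_nf; simp [mul_assoc, mul_comm, mul_left_comm]

lemma tpair_snd (w : List ℕ) : (tpair w).2 = (-1) ^ w.sum := by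
  induction w with
  | nil => simp [tpair]
  | cons a w ih => simp [tpair, ih, pow_add]

lemma tpair_concat (w : List ℕ) (a : ℕ) :
    (tpair (w ++ [a])).1 = (tpair w).1 + (tpair w).2 := by
  rw [tpair_append]; simp [tpair]

lemma cw_cast (β : ℝ) (hβ : 0 ≤ β) (j : ℕ) :
    (cw β j : ℤ) = ⌊((j : ℝ) + 1) * β⌋ - ⌊(j : ℝ) * β⌋ := by
  have h : ⌊(j : ℝ) * β⌋ ≤ ⌊((j : ℝ) + 1) * β⌋ :=
    Int.floor_le_floor (by nlinarith)
  unfold cw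
  exact Int.toNat_of_nonneg (by omega)

lemma sum_cw (β : ℝ) (hβ : 0 ≤ β) (ℓ : ℕ) :
    ((((List.range ℓ).map (cw β)).sum : ℕ) : ℤ) = ⌊(ℓ : ℝ) * β⌋ := by
  induction ℓ with
  | zero => simp
  | succ n ih =>
      rw [List.range_succ, List.map_append, List.sum_append, Nat.cast_add, ih]
      simp only [List.map_cons, List.map_nil, List.sum_cons, List.sum_nil, add_zero]
      rw [cw_cast β hβ]
      push_cast
      ring

lemma phi_fract_eq (y : ℝ) (hy : 0 ≤ y) :
    phi (Int.fract y) = (-1 : ℤ) ^ (⌊2 * y⌋).toNat := by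
  have hfl : (0:ℤ) ≤ ⌊y⌋ := Int.floor_nonneg.2 hy
  have h2y : ⌊2 * y⌋ = 2 * ⌊y⌋ + ⌊2 * Int.fract y⌋ := by
    have hy2 : 2 * y = ((2 * ⌊y⌋ : ℤ) : ℝ) + 2 * Int.fract y := by
      rw [Int.fract]; push_cast; ring
    rw [hy2, Int.floor_intCast_add]
  have hf0 : (0:ℝ) ≤ Int.fract y := Int.fract_nonneg y
  have hf1 : Int.fract y < 1 := Int.fract_lt_one y
  by_cases h : Int.fract y < 1/2
  · have : ⌊2 * Int.fract y⌋ = 0 := by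
      rw [Int.floor_eq_zero_iff, Set.mem_Ico]; constructor <;> linarith
    rw [phi, if_pos (by rwa [Int.fract_fract])]
    rw [h2y, this, add_zero]
    have : (2 * ⌊y⌋).toNat = 2 * ⌊y⌋.toNat := by omega
    rw [this, pow_mul]; norm_num
  · have : ⌊2 * Int.fract y⌋ = 1 := by
      rw [Int.floor_eq_iff]; push_cast; constructor <;> linarith
    rw [phi, if_neg (by rwa [Int.fract_fract])]
    rw [h2y, this]
    have : (2 * ⌊y⌋ + 1).toNat = 2 * ⌊y⌋.toNat + 1 := by omega
    rw [this, pow_succ, pow_mul]; norm_num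

lemma sPos_eq_tpair (α : ℝ) (h0 : 0 < α) (ℓ : ℕ) :
    sPos α ℓ = (tpair ((List.range ℓ).map (cw (2 * α)))).1 := by
  induction ℓ with
  | zero => simp [sPos, tpair]
  | succ n ih =>
      rw [sPos, Finset.sum_range_succ, ← sPos, ih, List.range_succ, List.map_append]
      simp only [List.map_cons, List.map_nil]
      rw [tpair_concat, tpair_snd]
      congr 1
      rw [phi_fract_eq _ (by positivity)]
      have hs := sum_cw (2 * α) (by linarith) n
      have hfl : ⌊2 * ((n:ℝ) * α)⌋ = ⌊(n:ℝ) * (2 * α)⌋ := by ring_nf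
      congr 1
      omega

/-- One step of the minus continued fraction algorithm preserves irrationality and (0,1). -/
lemma step_facts {x : ℝ} (hx : Irrational x) (h0 : 0 < x) (h1 : x < 1) :
    Irrational ((⌈1/x⌉ : ℝ) - 1/x) ∧ 0 < ((⌈1/x⌉:ℝ) - 1/x) ∧ ((⌈1/x⌉:ℝ) - 1/x) < 1 := by
  have hinv : Irrational (1/x) := by
    rw [one_div]; exact irrational_inv_iff.mpr hx
  refine ⟨irrational_intCast_sub_iff.mpr hinv, ?_, ?_⟩
  · have hle : 1/x ≤ (⌈1/x⌉ : ℝ) := Int.le_ceil _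
    have hne : 1/x ≠ (⌈1/x⌉ : ℝ) := hinv.ne_int _
    have : 1/x < (⌈1/x⌉ : ℝ) := lt_of_le_of_ne hle hne
    linarith
  · have := Int.ceil_lt_add_one (1/x)
    linarith

lemma betaSeq_facts {β : ℝ} (hβ : Irrational β) (h0 : 0 < β) (h1 : β < 1) (k : ℕ) :
    Irrational (betaSeq β k) ∧ 0 < betaSeq β k ∧ betaSeq β k < 1 := by
  induction k with
  | zero => exact ⟨hβ, h0, h1⟩
  | succ n ih => exact step_facts ih.1 ih.2.1 ih.2.2

lemma nDigit_ge_two {β : ℝ} (hβ : Irrational β) (h0 : 0 < β) (h1 : β < 1) (k : ℕ) :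
    2 ≤ nDigit β k := by
  obtain ⟨hi, hp, hl⟩ := betaSeq_facts hβ h0 h1 k
  have : (1:ℝ) < 1 / betaSeq β k := by
    rw [lt_div_iff₀ hp]; linarith
  have h2 : (1:ℤ) < ⌈1 / betaSeq β k⌉ := Int.lt_ceil.mpr (by exact_mod_cast this)
  rw [nDigit]; omega

lemma betaSeq_shift (β : ℝ) (k : ℕ) :
    betaSeq β (k+1) = betaSeq (betaSeq β 1) k := by
  induction k with
  | zero => rfl
  | succ n ih => rw [betaSeq, ih]; rfl

lemma nDigit_shift (β : ℝ) (k : ℕ) : nDigit β (k+1) = nDigit (betaSeq β 1) k := by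
  rw [nDigit, nDigit, betaSeq_shift]

lemma flatten_replicate_len (m : ℕ) (w : List ℕ) :
    ((List.replicate m w).flatten).length = m * w.length := by
  induction m with
  | zero => simp
  | succ n ih => rw [List.replicate_succ, List.flatten_cons, List.length_append, ih]; ring

lemma bword_succ (β : ℝ) (k : ℕ) :
    bword β (k+1) =
      ((List.replicate (nDigit β k - 1).toNat (bword β k).1).flatten ++ (bword β k).2,
       (List.replicate (nDigit β k - 2).toNat (bword β k).1).flatten ++ (bword β k).2) := rfl

lemma ell_succ (β : ℝ) (k : ℕ) :
    ell β (k+1) = ((nDigit β k - 1).toNat * (ell β k).1 + (ell β k).2,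
            (nDigit β k - 2).toNat * (ell β k).1 + (ell β k).2) := rfl

lemma bword_len (β : ℝ) (k : ℕ) :
    (bword β k).1.length = (ell β k).1 ∧ (bword β k).2.length = (ell β k).2 := by
  induction k with
  | zero => simp [bword, ell]
  | succ n ih =>
      rw [bword_succ, ell_succ]
      constructor <;>
      · simp only [List.length_append, flatten_replicate_len, ih.1, ih.2]

lemma ell_pos (β : ℝ) (k : ℕ) : 1 ≤ (ell β k).1 ∧ 1 ≤ (ell β k).2 := by
  induction k with
  | zero => exact ⟨le_refl _, le_refl _⟩
  | succ n ih => rw [ell_succ]; have := ih.2; constructor <;> simp <;> omega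

/-- The substitution block. -/
def tau (n : ℕ) (c : ℕ) : List ℕ := List.replicate (n - 1 - c) 0 ++ [1]

lemma flatMap_flatten_replicate (τ : ℕ → List ℕ) (m : ℕ) (w : List ℕ) :
    ((List.replicate m w).flatten).flatMap τ = (List.replicate m (w.flatMap τ)).flatten := by
  induction m with
  | zero => simp
  | succ n ih =>
      rw [List.replicate_succ, List.flatten_cons, List.flatMap_append, ih,
        List.replicate_succ, List.flatten_cons]

lemma flatten_replicate_single (m : ℕ) (a : ℕ) :
    (List.replicate m ([a] : List ℕ)).flatten = List.replicate m a := by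
  induction m with
  | zero => simp
  | succ n ih => rw [List.replicate_succ, List.flatten_cons, ih, List.replicate_succ]; rfl

/-- The word recursion is conjugate to the substitution `tau`. -/
lemma bword_subst {β : ℝ} (hβ : Irrational β) (h0 : 0 < β) (h1 : β < 1) (k : ℕ) :
    (bword β (k+1)).1 = (bword (betaSeq β 1) k).1.flatMap (tau (nDigit β 0).toNat) ∧
    (bword β (k+1)).2 = (bword (betaSeq β 1) k).2.flatMap (tau (nDigit β 0).toNat) := by
  have hn2 : 2 ≤ nDigit β 0 := nDigit_ge_two hβ h0 h1 0
  induction k with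
  | zero =>
      rw [bword_succ]
      constructor
      · show (List.replicate (nDigit β 0 - 1).toNat [0]).flatten ++ [1] = [0].flatMap _
        rw [flatten_replicate_single]
        simp only [List.flatMap_cons, List.flatMap_nil, List.append_nil, tau]
        congr 2
        omega
      · show (List.replicate (nDigit β 0 - 2).toNat [0]).flatten ++ [1] = [1].flatMap _
        rw [flatten_replicate_single]
        simp only [List.flatMap_cons, List.flatMap_nil, List.append_nil, tau]
        congr 2
        omega
  | succ n ih =>
      have hd : nDigit β (n+1) = nDigit (betaSeq β 1) n := nDigit_shift β n
      rw [bword_succ β (n+1), bword_succ (betaSeq β 1) n]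
      dsimp only
      rw [ih.1, ih.2, hd, List.flatMap_append, List.flatMap_append,
        flatMap_flatten_replicate, flatMap_flatten_replicate]
      exact ⟨rfl, rfl⟩

lemma cw_le_one {β : ℝ} (h0 : 0 ≤ β) (h1 : β < 1) (j : ℕ) : cw β j ≤ 1 := by
  have h : ⌊((j:ℝ) + 1) * β⌋ ≤ ⌊(j:ℝ) * β⌋ + 1 := by
    rw [← Int.floor_add_one]
    exact Int.floor_le_floor (by nlinarith)
  rw [cw]; omega

lemma beta1_eq {β : ℝ} (hne : β ≠ 0) : betaSeq β 1 = (⌈1/β⌉ : ℝ) - 1/β := rfl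

/-- `⌈R/β⌉ = R⌈1/β⌉ - ⌊R β₁⌋`. -/
lemma ceil_div_eq {β : ℝ} (h0 : 0 < β) (R : ℕ) :
    ⌈(R:ℝ)/β⌉ = R * ⌈1/β⌉ - ⌊(R:ℝ) * betaSeq β 1⌋ := by
  have hne : β ≠ 0 := ne_of_gt h0
  have hrw : (R:ℝ)/β = -((R:ℝ) * betaSeq β 1) + ((R * ⌈1/β⌉ : ℤ) : ℝ) := by
    rw [beta1_eq hne]
    push_cast
    field_simp
    ring
  rw [hrw, Int.ceil_add_intCast, Int.ceil_neg]
  ring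

/-- Characterization of `⌊jβ⌋ = R` as an interval of `j`. -/
lemma floor_interval {β : ℝ} (h0 : 0 < β) (j R : ℕ) :
    ⌊(j:ℝ) * β⌋ = R ↔ (⌈(R:ℝ)/β⌉ ≤ (j:ℤ) ∧ (j:ℤ) < ⌈((R:ℝ)+1)/β⌉) := by
  rw [Int.floor_eq_iff]
  constructor
  · rintro ⟨hl, hr⟩
    constructor
    · rw [Int.ceil_le]
      push_cast
      rw [div_le_iff₀ h0]
      exact_mod_cast hl
    · rw [Int.lt_ceil]
      push_cast
      rw [lt_div_iff₀ h0]
      exact_mod_cast hr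
  · rintro ⟨hl, hr⟩
    rw [Int.ceil_le] at hl
    rw [Int.lt_ceil] at hr
    push_cast at hl hr
    rw [div_le_iff₀ h0] at hl
    rw [lt_div_iff₀ h0] at hr
    constructor
    · exact_mod_cast hl
    · exact_mod_cast hr

/-- The key decomposition: the coding word of `β` is the `tau`-image of the coding word
of `β₁`. -/
lemma cw_decomp {β : ℝ} (hβ : Irrational β) (h0 : 0 < β) (h1 : β < 1) (R : ℕ) :
    (List.range (R * (⌈1/β⌉).toNat - ((List.range R).map (cw (betaSeq β 1))).sum)).map (cw β)
      = ((List.range R).map (cw (betaSeq β 1))).flatMap (tau (⌈1/β⌉).toNat) := by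
  obtain ⟨h1irr, h10, h11⟩ := betaSeq_facts hβ h0 h1 1
  have hn2 : (2:ℤ) ≤ ⌈1/β⌉ := by
    have := nDigit_ge_two hβ h0 h1 0
    rwa [nDigit] at this
  set n : ℕ := (⌈1/β⌉).toNat with hn
  have hnc : (n : ℤ) = ⌈1/β⌉ := Int.toNat_of_nonneg (by omega)
  have hn2' : 2 ≤ n := by omega
  set β₁ : ℝ := betaSeq β 1 with hβ₁
  have hsum : ∀ R : ℕ, ((((List.range R).map (cw β₁)).sum : ℕ) : ℤ) = ⌊(R:ℝ) * β₁⌋ :=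
    sum_cw β₁ (le_of_lt h10)
  have hcw1 : ∀ j, cw β₁ j ≤ 1 := cw_le_one (le_of_lt h10) h11
  have hsum_le : ∀ R : ℕ, ((List.range R).map (cw β₁)).sum ≤ R := by
    intro R
    calc ((List.range R).map (cw β₁)).sum ≤ ((List.range R).map (cw β₁)).length • 1 :=
          List.sum_le_card_nsmul _ 1 (by
            intro x hx
            obtain ⟨j, _, rfl⟩ := List.mem_map.1 hx
            exact hcw1 j)
      _ = R := by simp
  have hJ : ∀ R : ℕ, ((R * n - ((List.range R).map (cw β₁)).sum : ℕ) : ℤ) = ⌈(R:ℝ)/β⌉ := by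
    intro R
    have h1' : ((List.range R).map (cw β₁)).sum ≤ R * n :=
      le_trans (hsum_le R) (Nat.le_mul_of_pos_right R (by omega))
    rw [Nat.cast_sub h1', Nat.cast_mul, hsum R, ceil_div_eq h0 R, hnc]
  induction R with
  | zero => simp
  | succ R ih =>
      set c : ℕ := cw β₁ R with hc
      have hcle : c ≤ 1 := hcw1 R
      have hsumsucc : ((List.range (R+1)).map (cw β₁)).sum
          = ((List.range R).map (cw β₁)).sum + c := by
        rw [List.range_succ, List.map_append, List.sum_append]
        simp [hc]
      have hmul1 : (R+1) * n = R * n + n := by ring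
      have hmul2 : (R+2) * n = R * n + n + n := by ring
      have hlen : (R+1) * n - ((List.range (R+1)).map (cw β₁)).sum
          = (R * n - ((List.range R).map (cw β₁)).sum) + (n - c) := by
        have h2' : R ≤ R * n := Nat.le_mul_of_pos_right R (by omega)
        have := hsum_le R
        omega
      rw [hlen, List.range_add, List.map_append, List.range_succ, List.map_append,
        List.flatMap_append, ih]
      congr 1
      simp only [List.map_cons, List.map_nil, List.flatMap_cons, List.flatMap_nil,
        List.append_nil, List.map_map]
      set J : ℕ := R * n - ((List.range R).map (cw β₁)).sum with hJdef
      have hJR : (J : ℤ) = ⌈(R:ℝ)/β⌉ := hJ R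
      have hJR1 : ((J + (n - c) : ℕ) : ℤ) = ⌈((R:ℝ)+1)/β⌉ := by
        have h2 := hJ (R+1)
        rw [hlen] at h2
        have hcast : ((R:ℝ)+1) = ((R+1 : ℕ):ℝ) := by push_cast; ring
        rw [hcast]
        exact h2
      have hfloor : ∀ i : ℕ, i < n - c → ⌊((J + i : ℕ):ℝ) * β⌋ = R := by
        intro i hi
        rw [floor_interval h0]
        constructor
        · push_cast
          omega
        · have hlt : ((J + i : ℕ) : ℤ) < ((J + (n - c) : ℕ) : ℤ) := by push_cast; omega
          rw [hJR1] at hlt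
          exact hlt
      have hgap1 : 1 ≤ n - c := by omega
      have hval0 : ∀ i : ℕ, i + 1 < n - c → cw β (J + i) = 0 := by
        intro i hi
        have e1 : ⌊((J + i : ℕ):ℝ) * β⌋ = R := hfloor i (by omega)
        have e2 : ⌊((J + (i + 1) : ℕ):ℝ) * β⌋ = R := hfloor (i+1) hi
        have h' : (cw β (J+i) : ℤ) = 0 := by
          rw [cw_cast β (le_of_lt h0)]
          push_cast at e1 e2 ⊢
          ring_nf at e1 e2 ⊢
          omega
        exact_mod_cast h'
      have hval1 : cw β (J + (n - c - 1)) = 1 := by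
        set j : ℕ := J + (n - c - 1) with hj
        have e1 : ⌊((j : ℕ):ℝ) * β⌋ = R := hfloor _ (by omega)
        have e2 : ⌊((j + 1 : ℕ):ℝ) * β⌋ = ((R+1 : ℕ) : ℤ) := by
          have hjj : j + 1 = J + (n - c) := by omega
          rw [hjj, floor_interval h0]
          constructor
          · push_cast at hJR1 ⊢
            omega
          · -- J + (n-c) < ⌈(R+2)/β⌉
            have hd2 := hJ (R+2)
            have hcast2 : (((R+1:ℕ):ℝ)+1) = ((R+2 : ℕ):ℝ) := by push_cast; ring
            rw [hcast2, ← hd2]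
            have hs2 : ((List.range (R+2)).map (cw β₁)).sum
                = ((List.range (R+1)).map (cw β₁)).sum + cw β₁ (R+1) := by
              rw [List.range_succ, List.map_append, List.sum_append]
              simp
            have hc2le : cw β₁ (R+1) ≤ 1 := hcw1 (R+1)
            have hsle1 := hsum_le (R+1)
            have hsle2 := hsum_le (R+2)
            have hnat : J + (n - c) < (R+2) * n - ((List.range (R+2)).map (cw β₁)).sum := by
              have h2' : R ≤ R * n := Nat.le_mul_of_pos_right R (by omega)
              omega
            exact_mod_cast hnat
        have h' : (cw β j : ℤ) = 1 := by
          rw [cw_cast β (le_of_lt h0)]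
          push_cast at e1 e2 ⊢
          ring_nf at e1 e2 ⊢
          omega
        exact_mod_cast h'
      have hnc1 : n - c = (n - 1 - c) + 1 := by omega
      rw [hnc1, List.range_succ, List.map_append, tau]
      congr 1
      · apply List.eq_replicate_iff.mpr
        constructor
        · simp [hc]
        · intro b hb
          obtain ⟨i, hi, rfl⟩ := List.mem_map.1 hb
          rw [List.mem_range] at hi
          simpa using hval0 i (by omega)
      · simp only [List.map_cons, List.map_nil]
        congr 1
        have hh : n - 1 - c = n - c - 1 := by omega
        simpa [hh] using hval1

lemma nDigit_zero_eq (β : ℝ) : nDigit β 0 = ⌈1/β⌉ := rfl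

/-- The word `b_k(0)` is a prefix of the coding word of `β`. -/
lemma cw_prefix0 : ∀ (k : ℕ) {β : ℝ}, Irrational β → 0 < β → β < 1 →
    (List.range (ell β k).1).map (cw β) = (bword β k).1 := by
  intro k
  induction k with
  | zero =>
      intro β hβ h0 h1
      have hfl : ⌊β⌋ = 0 := Int.floor_eq_zero_iff.mpr ⟨le_of_lt h0, h1⟩
      show (List.range 1).map (cw β) = [0]
      have hcw0 : cw β 0 = 0 := by unfold cw; norm_num [hfl]
      rw [show List.range 1 = [0] from rfl, List.map_cons, List.map_nil, hcw0]
  | succ k ih =>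
      intro β hβ h0 h1
      obtain ⟨h1irr, h10, h11⟩ := betaSeq_facts hβ h0 h1 1
      have IH := ih h1irr h10 h11
      have hD := cw_decomp hβ h0 h1 ((ell (betaSeq β 1) k).1)
      rw [IH] at hD
      have hB := (bword_subst hβ h0 h1 k).1
      rw [nDigit_zero_eq] at hB
      rw [← hB] at hD
      have hlen : (ell (betaSeq β 1) k).1 * (⌈1/β⌉).toNat - (bword (betaSeq β 1) k).1.sum
          = (ell β (k+1)).1 := by
        have := congrArg List.length hD
        simpa [(bword_len β (k+1)).1] using this
      rw [← hlen]
      exact hD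

/-- `b_k(1)` agrees with `b_k(0)` except at its last letter (`k ≥ 1`). -/
lemma bword_dropLast {β : ℝ} (hβ : Irrational β) (h0 : 0 < β) (h1 : β < 1) :
    ∀ k, 1 ≤ k → (bword β k).2.dropLast <+: (bword β k).1 := by
  intro k hk
  induction k, hk using Nat.le_induction with
  | base =>
      have hd2 : 2 ≤ nDigit β 0 := nDigit_ge_two hβ h0 h1 0
      have hm1 : (nDigit β 0 - 1).toNat = (nDigit β 0 - 2).toNat + 1 := by omega
      rw [bword_succ β 0, show bword β 0 = ([0],[1]) from rfl]
      dsimp only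
      rw [flatten_replicate_single, flatten_replicate_single, List.dropLast_concat, hm1,
        List.replicate_succ']
      refine ⟨[0] ++ [1], ?_⟩
      simp
  | succ k hk IH =>
      have hd2 : 2 ≤ nDigit β k := nDigit_ge_two hβ h0 h1 k
      have hm1 : (nDigit β k - 1).toNat = (nDigit β k - 2).toNat + 1 := by omega
      have hb1ne : (bword β k).2 ≠ [] := by
        intro hnil
        have h2 := (bword_len β k).2
        rw [hnil] at h2
        simp at h2
        have := (ell_pos β k).2
        omega
      rw [bword_succ β k]
      dsimp only
      rw [List.dropLast_append_of_ne_nil hb1ne, hm1, List.replicate_succ',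
        List.flatten_append]
      have hfl : ([(bword β k).1] : List (List ℕ)).flatten = (bword β k).1 := by simp
      rw [hfl, List.append_assoc, List.prefix_append_right_inj]
      exact IH.trans (List.prefix_append _ _)

/-- The coding prefix of length `ℓ_k(1)` agrees with `b_k(1)` except at the last letter. -/
lemma cw_prefix1 {β : ℝ} (hβ : Irrational β) (h0 : 0 < β) (h1 : β < 1) (k : ℕ) (hk : 1 ≤ k) :
    (List.range (ell β k).2).map (cw β)
      = (bword β k).2.dropLast ++ [cw β ((ell β k).2 - 1)] := by
  have hp := bword_dropLast hβ h0 h1 k hk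
  have h0p := cw_prefix0 k hβ h0 h1
  have hl2 : 1 ≤ (ell β k).2 := (ell_pos β k).2
  have hdl : (bword β k).2.dropLast.length = (ell β k).2 - 1 := by
    rw [List.length_dropLast, (bword_len β k).2]
  have hle : (ell β k).2 - 1 ≤ (ell β k).1 := by
    have h' := hp.length_le
    rw [hdl, (bword_len β k).1] at h'
    exact h'
  have htake : (bword β k).2.dropLast = (bword β k).1.take ((ell β k).2 - 1) := by
    rw [List.prefix_iff_eq_take] at hp
    rw [← hdl]
    exact hp
  have hr : List.range ((ell β k).2 - 1) = (List.range (ell β k).1).take ((ell β k).2 - 1) := by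
    rw [List.take_range]
    congr 1
    omega
  conv_lhs => rw [show (ell β k).2 = ((ell β k).2 - 1) + 1 from by omega]
  rw [List.range_succ, List.map_append, hr, List.map_take, h0p, ← htake]
  simp

lemma tpair_flatten_replicate (m : ℕ) (w : List ℕ) :
    tpair ((List.replicate m w).flatten)
      = ((∑ j ∈ Finset.range m, (tpair w).2 ^ j) * (tpair w).1, (tpair w).2 ^ m) := by
  induction m with
  | zero => simp [tpair]
  | succ n ih =>
      rw [List.replicate_succ, List.flatten_cons, tpair_append, ih]
      refine Prod.ext ?_ ?_
      · show (tpair w).1 + (tpair w).2 * (_ * (tpair w).1) = _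
        rw [geom_sum_succ]
        ring
      · show (tpair w).2 * (tpair w).2 ^ n = (tpair w).2 ^ (n+1)
        rw [pow_succ]
        ring

lemma tpair_replicate_zero (m : ℕ) : tpair (List.replicate m 0) = ((m : ℤ), 1) := by
  induction m with
  | zero => simp [tpair]
  | succ n ih =>
      rw [List.replicate_succ]
      show tpair (0 :: List.replicate n 0) = _
      rw [tpair, ih]
      norm_num [add_comm]

/-- The full recursion for `tpair` of the words. -/
lemma tpair_rec (β : ℝ) (k : ℕ) :
    (tpair (bword β (k+1)).1).1
      = (∑ j ∈ Finset.range (nDigit β k - 1).toNat, (tpair (bword β k).1).2 ^ j)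
          * (tpair (bword β k).1).1
        + (tpair (bword β k).1).2 ^ (nDigit β k - 1).toNat * (tpair (bword β k).2).1 ∧
    (tpair (bword β (k+1)).2).1
      = (∑ j ∈ Finset.range (nDigit β k - 2).toNat, (tpair (bword β k).1).2 ^ j)
          * (tpair (bword β k).1).1
        + (tpair (bword β k).1).2 ^ (nDigit β k - 2).toNat * (tpair (bword β k).2).1 ∧
    (tpair (bword β (k+1)).1).2
      = (tpair (bword β k).1).2 ^ (nDigit β k - 1).toNat * (tpair (bword β k).2).2 ∧
    (tpair (bword β (k+1)).2).2
      = (tpair (bword β k).1).2 ^ (nDigit β k - 2).toNat * (tpair (bword β k).2).2 := by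
  rw [bword_succ β k]
  dsimp only
  rw [tpair_append, tpair_append, tpair_flatten_replicate, tpair_flatten_replicate]
  exact ⟨rfl, rfl, rfl, rfl⟩

/-- The invariant: position values at the renormalization times. -/
lemma inv_lemma {β : ℝ} (hβ : Irrational β) (h0 : 0 < β) (h1 : β < 1) :
    ∀ k, 1 ≤ k →
    ((tpair (bword β k).1).2 = -1 ∧ (tpair (bword β k).2).2 = 1 ∧
      (tpair (bword β k).2).1 = 1) ∨
    ((tpair (bword β k).1).2 = 1 ∧ (tpair (bword β k).2).2 = -1 ∧
      (tpair (bword β k).1).1 = 1) ∨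
    ((tpair (bword β k).1).2 = -1 ∧ (tpair (bword β k).2).2 = -1 ∧
      (tpair (bword β k).1).1 = (tpair (bword β k).2).1 + 1) := by
  intro k hk
  induction k, hk using Nat.le_induction with
  | base =>
      have hd2 : 2 ≤ nDigit β 0 := nDigit_ge_two hβ h0 h1 0
      have hm1 : (nDigit β 0 - 1).toNat = (nDigit β 0 - 2).toNat + 1 := by omega
      right; right
      rw [bword_succ β 0, show bword β 0 = ([0],[1]) from rfl]
      dsimp only
      rw [flatten_replicate_single, flatten_replicate_single, tpair_append, tpair_append,
        tpair_replicate_zero, tpair_replicate_zero, hm1]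
      norm_num [tpair]
  | succ k hk IH =>
      have hd2 : 2 ≤ nDigit β k := nDigit_ge_two hβ h0 h1 k
      obtain ⟨m2, hm2⟩ : ∃ m, (nDigit β k - 2).toNat = m := ⟨_, rfl⟩
      have hm1 : (nDigit β k - 1).toNat = m2 + 1 := by omega
      obtain ⟨r1, r2, r3, r4⟩ := tpair_rec β k
      rw [hm1] at r1 r3
      rw [hm2] at r2 r4
      rcases IH with ⟨hE0, hE1, hT⟩ | ⟨hE0, hE1, hT⟩ | ⟨hE0, hE1, hT⟩
      · -- state A : (-1, 1), T1 = 1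
        simp only [hE0, hE1, hT] at r1 r2 r3 r4
        rcases Nat.even_or_odd m2 with hm | hm
        · left
          refine ⟨?_, ?_, ?_⟩
          · rw [r3, (hm.add_one).neg_one_pow]; ring
          · rw [r4, hm.neg_one_pow]; ring
          · rw [r2, neg_one_geom_sum, if_pos hm, hm.neg_one_pow]; ring
        · right; left
          refine ⟨?_, ?_, ?_⟩
          · rw [r3, (hm.add_one).neg_one_pow]; ring
          · rw [r4, hm.neg_one_pow]; ring
          · rw [r1, neg_one_geom_sum, if_pos hm.add_one, (hm.add_one).neg_one_pow]; ring
      · -- state B : (1, -1), T0 = 1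
        right; right
        simp only [hE0, hE1, hT] at r1 r2 r3 r4
        refine ⟨?_, ?_, ?_⟩
        · rw [r3]; ring
        · rw [r4]; ring
        · rw [r1, r2]
          simp only [one_pow, Finset.sum_const, Finset.card_range, nsmul_eq_mul, smul_eq_mul, mul_one]
          push_cast
          ring
      · -- state C : (-1, -1), T0 = T1 + 1
        simp only [hE0, hE1] at r1 r2 r3 r4
        rcases Nat.even_or_odd m2 with hm | hm
        · right; left
          refine ⟨?_, ?_, ?_⟩
          · rw [r3, (hm.add_one).neg_one_pow]; ring
          · rw [r4, hm.neg_one_pow]; ring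
          · rw [r1, neg_one_geom_sum, if_neg (Nat.not_even_iff_odd.mpr hm.add_one),
              (hm.add_one).neg_one_pow, hT]
            ring
        · left
          refine ⟨?_, ?_, ?_⟩
          · rw [r3, (hm.add_one).neg_one_pow]; ring
          · rw [r4, hm.neg_one_pow]; ring
          · rw [r2, neg_one_geom_sum, if_neg (Nat.not_even_iff_odd.mpr hm), hm.neg_one_pow, hT]
            ring

lemma snd_eq_one_of {w : List ℕ} (h : w.sum % 2 = 0) : (tpair w).2 = 1 := by
  rw [tpair_snd]; exact (Nat.even_iff.mpr h).neg_one_pow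

lemma snd_eq_neg_one_of {w : List ℕ} (h : w.sum % 2 = 1) : (tpair w).2 = -1 := by
  rw [tpair_snd]; exact (Nat.odd_iff.mpr h).neg_one_pow

lemma tpair_dropLast_concat {w : List ℕ} (hne : w ≠ []) (x : ℕ) :
    (tpair (w.dropLast ++ [x])).1 = (tpair w).1 := by
  conv_rhs => rw [← List.dropLast_append_getLast hne]
  rw [tpair_concat, tpair_concat]

theorem position_increments
    (α : ℝ) (h0 : 0 < α) (h1 : α < 1/2) (hirr : Irrational α)
    (k : ℕ) (hk : 1 ≤ k) :
    (eps (2*α) k = (1,0) → eps (2*α) (k+1) = (0,1) →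
      sPos α (ell (2*α) k).1 - sPos α (ell (2*α) (k+1)).2 = 1) ∧
    (eps (2*α) k = (1,0) → eps (2*α) (k+1) = (1,0) →
      sPos α (ell (2*α) k).1 - sPos α (ell (2*α) (k+1)).1 = 1) ∧
    (eps (2*α) k = (1,1) → eps (2*α) (k+1) = (1,0) →
      sPos α (ell (2*α) k).1 - sPos α (ell (2*α) (k+1)).1 = 1) ∧
    (eps (2*α) k = (1,1) → eps (2*α) (k+1) = (0,1) →
      sPos α (ell (2*α) k).1 - sPos α (ell (2*α) (k+1)).2 = 1) ∧
    (eps (2*α) k = (0,1) → eps (2*α) (k+1) = (1,1) →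
      sPos α (ell (2*α) (k+1)).1 - sPos α (ell (2*α) k).2 = nDigit (2*α) k - 1) := by

  have hβ : Irrational (2*α) := by
    have h2 : Irrational (((2:ℕ):ℝ) * α) := irrational_natCast_mul_iff.mpr ⟨by norm_num, hirr⟩
    simpa using h2
  have hβ0 : 0 < 2*α := by linarith
  have hβ1 : 2*α < 1 := by linarith
  have hs0 : ∀ m, sPos α (ell (2*α) m).1 = (tpair (bword (2*α) m).1).1 := fun m => by
    rw [sPos_eq_tpair α h0, cw_prefix0 m hβ hβ0 hβ1]
  have hs1 : ∀ m, 1 ≤ m → sPos α (ell (2*α) m).2 = (tpair (bword (2*α) m).2).1 := by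
    intro m hm
    have hne : (bword (2*α) m).2 ≠ [] := by
      intro hnil
      have h2 := (bword_len (2*α) m).2
      rw [hnil] at h2
      simp at h2
      have := (ell_pos (2*α) m).2
      omega
    rw [sPos_eq_tpair α h0, cw_prefix1 hβ hβ0 hβ1 m hm]
    exact tpair_dropLast_concat hne _
  have hd2 : 2 ≤ nDigit (2*α) k := nDigit_ge_two hβ hβ0 hβ1 k
  obtain ⟨m2, hm2⟩ : ∃ m, (nDigit (2*α) k - 2).toNat = m := ⟨_, rfl⟩
  have hm1 : (nDigit (2*α) k - 1).toNat = m2 + 1 := by omega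
  obtain ⟨r1, r2, r3, r4⟩ := tpair_rec (2*α) k
  rw [hm1] at r1 r3
  rw [hm2] at r2 r4
  have INV := inv_lemma hβ hβ0 hβ1 k hk
  refine ⟨?_, ?_, ?_, ?_, ?_⟩
  · -- (1,0) → (0,1)
    intro he hf
    have he1 : (bword (2*α) k).1.sum % 2 = 1 := by
      have := congrArg Prod.fst he; simpa [eps] using this
    have he2 : (bword (2*α) k).2.sum % 2 = 0 := by
      have := congrArg Prod.snd he; simpa [eps] using this
    have hf1 : (bword (2*α) (k+1)).1.sum % 2 = 0 := by
      have := congrArg Prod.fst hf; simpa [eps] using this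
    have hE0k := snd_eq_neg_one_of he1
    have hE1k := snd_eq_one_of he2
    have hE0k1 := snd_eq_one_of hf1
    rcases INV with ⟨a1, a2, a3⟩ | ⟨a1, a2, a3⟩ | ⟨a1, a2, a3⟩
    · rcases Nat.even_or_odd m2 with hm | hm
      · exfalso
        rw [hE0k1, a1, a2, (hm.add_one).neg_one_pow] at r3
        norm_num at r3
      · rw [hs0 k, hs1 (k+1) (by omega), r2, a1, neg_one_geom_sum,
          if_neg (Nat.not_even_iff_odd.mpr hm), hm.neg_one_pow, a3]
        ring
    · rw [a1] at hE0k; norm_num at hE0k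
    · rw [a2] at hE1k; norm_num at hE1k
  · -- (1,0) → (1,0)
    intro he hf
    have he1 : (bword (2*α) k).1.sum % 2 = 1 := by
      have := congrArg Prod.fst he; simpa [eps] using this
    have he2 : (bword (2*α) k).2.sum % 2 = 0 := by
      have := congrArg Prod.snd he; simpa [eps] using this
    have hf1 : (bword (2*α) (k+1)).1.sum % 2 = 1 := by
      have := congrArg Prod.fst hf; simpa [eps] using this
    have hE0k := snd_eq_neg_one_of he1
    have hE1k := snd_eq_one_of he2
    have hE0k1 := snd_eq_neg_one_of hf1
    rcases INV with ⟨a1, a2, a3⟩ | ⟨a1, a2, a3⟩ | ⟨a1, a2, a3⟩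
    · rcases Nat.even_or_odd m2 with hm | hm
      · rw [hs0 k, hs0 (k+1), r1, a1, neg_one_geom_sum,
          if_neg (Nat.not_even_iff_odd.mpr hm.add_one), (hm.add_one).neg_one_pow, a3]
        ring
      · exfalso
        rw [hE0k1, a1, a2, (hm.add_one).neg_one_pow] at r3
        norm_num at r3
    · rw [a1] at hE0k; norm_num at hE0k
    · rw [a2] at hE1k; norm_num at hE1k
  · -- (1,1) → (1,0)
    intro he hf
    have he1 : (bword (2*α) k).1.sum % 2 = 1 := by
      have := congrArg Prod.fst he; simpa [eps] using this
    have he2 : (bword (2*α) k).2.sum % 2 = 1 := by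
      have := congrArg Prod.snd he; simpa [eps] using this
    have hf1 : (bword (2*α) (k+1)).1.sum % 2 = 1 := by
      have := congrArg Prod.fst hf; simpa [eps] using this
    have hE0k := snd_eq_neg_one_of he1
    have hE1k := snd_eq_neg_one_of he2
    have hE0k1 := snd_eq_neg_one_of hf1
    rcases INV with ⟨a1, a2, a3⟩ | ⟨a1, a2, a3⟩ | ⟨a1, a2, a3⟩
    · rw [a2] at hE1k; norm_num at hE1k
    · rw [a1] at hE0k; norm_num at hE0k
    · rcases Nat.even_or_odd m2 with hm | hm
      · exfalso
        rw [hE0k1, a1, a2, (hm.add_one).neg_one_pow] at r3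
        norm_num at r3
      · rw [hs0 k, hs0 (k+1), r1, a1, neg_one_geom_sum, if_pos hm.add_one,
          (hm.add_one).neg_one_pow, a3]
        ring
  · -- (1,1) → (0,1)
    intro he hf
    have he1 : (bword (2*α) k).1.sum % 2 = 1 := by
      have := congrArg Prod.fst he; simpa [eps] using this
    have he2 : (bword (2*α) k).2.sum % 2 = 1 := by
      have := congrArg Prod.snd he; simpa [eps] using this
    have hf1 : (bword (2*α) (k+1)).1.sum % 2 = 0 := by
      have := congrArg Prod.fst hf; simpa [eps] using this
    have hE0k := snd_eq_neg_one_of he1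
    have hE1k := snd_eq_neg_one_of he2
    have hE0k1 := snd_eq_one_of hf1
    rcases INV with ⟨a1, a2, a3⟩ | ⟨a1, a2, a3⟩ | ⟨a1, a2, a3⟩
    · rw [a2] at hE1k; norm_num at hE1k
    · rw [a1] at hE0k; norm_num at hE0k
    · rcases Nat.even_or_odd m2 with hm | hm
      · rw [hs0 k, hs1 (k+1) (by omega), r2, a1, neg_one_geom_sum, if_pos hm,
          hm.neg_one_pow, a3]
        ring
      · exfalso
        rw [hE0k1, a1, a2, (hm.add_one).neg_one_pow] at r3
        norm_num at r3
  · -- (0,1) → (1,1)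
    intro he hf
    have he1 : (bword (2*α) k).1.sum % 2 = 0 := by
      have := congrArg Prod.fst he; simpa [eps] using this
    have he2 : (bword (2*α) k).2.sum % 2 = 1 := by
      have := congrArg Prod.snd he; simpa [eps] using this
    have hE0k := snd_eq_one_of he1
    have hE1k := snd_eq_neg_one_of he2
    rcases INV with ⟨a1, a2, a3⟩ | ⟨a1, a2, a3⟩ | ⟨a1, a2, a3⟩
    · rw [a1] at hE0k; norm_num at hE0k
    · rw [hs0 (k+1), hs1 k hk, r1, a1, a3]
      simp only [one_pow, Finset.sum_const, Finset.card_range, nsmul_eq_mul, smul_eq_mul, mul_one]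
      push_cast
      omega
    · rw [a1] at hE0k; norm_num at hE0k
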